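/- Let A₁, A₂ be self-adjoint operators on Hilbert spaces H₁, H₂ respectively, and let T ∈ B(H₁, H₂) be a bounded operator. Suppose there is C > 0 such that for all integers m, n ∈ ℤ, ‖F(m ≤ A₂ < m+1) T F(n ≤ A₁ < n+1)‖ ≤ C. Then T extends to a bounded operator from B(A₁) to B(A₂)* with ‖T‖_{B(B(A₁), B(A₂)*)} ≤ 2C. -/

import Mathlib

open scoped InnerProductSpace ENNReal

noncomputable section

/-- The dyadic radii: `R_0 = 0`, `R_j = 2^(j-1)` for `j ≥ 1`
(here indexed so that `dyadicR (k+1) = 2^k`). -/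
def dyadicR : ℕ → ℝ
  | 0 => 0
  | k + 1 => 2 ^ k

/-- An abstract projection-valued (spectral) measure on `ℝ`, modelling the spectral
resolution of a self-adjoint operator `A` on a complex Hilbert space `H`:
`P S` is the spectral projection of `A` onto the Borel set `S`. -/
structure SpectralMeasure (H : Type*) [NormedAddCommGroup H] [InnerProductSpace ℂ H]
    [CompleteSpace H] where
  P : Set ℝ → H →L[ℂ] H
  inter : ∀ S T : Set ℝ, (P S).comp (P T) = P (S ∩ T)
  symm : ∀ (S : Set ℝ) (u v : H), ⟪P S u, v⟫_ℂ = ⟪u, P S v⟫_ℂ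
  empty : P ∅ = 0
  univ : P Set.univ = ContinuousLinearMap.id ℂ H
  hasSum_iUnion : ∀ S : ℕ → Set ℝ, Pairwise (Function.onFun Disjoint S) →
    ∀ u : H, HasSum (fun n => P (S n) u) (P (⋃ n, S n) u)

variable {H : Type*} [NormedAddCommGroup H] [InnerProductSpace ℂ H] [CompleteSpace H]

/-- The spectral projection `F_j(A)` onto `{R_{j-1} ≤ |A| < R_j}` (0-indexed: `band k`
corresponds to `F_{k+1}`). -/
def SpectralMeasure.band (A : SpectralMeasure H) (k : ℕ) : H →L[ℂ] H :=
  A.P {t : ℝ | dyadicR k ≤ |t| ∧ |t| < dyadicR (k + 1)}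

/-- The Besov norm `‖u‖_B = Σ_j R_j^{1/2} ‖F_j(A) u‖`, valued in `ℝ≥0∞`;
`u ∈ B(A)` precisely when this is finite. -/
def SpectralMeasure.besov (A : SpectralMeasure H) (u : H) : ℝ≥0∞ :=
  ∑' k : ℕ, ENNReal.ofReal (Real.sqrt (dyadicR (k + 1)) * ‖A.band k u‖)

/-! ### Auxiliary definitions and lemmas -/

/-- The unit interval `[n, n+1)`. -/
def unitI (n : ℤ) : Set ℝ := {t : ℝ | (n : ℝ) ≤ t ∧ t < (n : ℝ) + 1}

/-- The dyadic band `{R_k ≤ |t| < R_{k+1}}`. -/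
def bandSet (k : ℕ) : Set ℝ := {t : ℝ | dyadicR k ≤ |t| ∧ |t| < dyadicR (k + 1)}

lemma unitI_disjoint {m n : ℤ} (h : m ≠ n) : Disjoint (unitI m) (unitI n) := by
  rw [Set.disjoint_left]
  rintro t ⟨hm1, hm2⟩ ⟨hn1, hn2⟩
  rcases lt_or_gt_of_ne h with h' | h'
  · have h'' : ((m + 1 : ℤ) : ℝ) ≤ ((n : ℤ) : ℝ) := by
      exact_mod_cast Int.lt_iff_add_one_le.mp h'
    push_cast at h''
    linarith
  · have h'' : ((n + 1 : ℤ) : ℝ) ≤ ((m : ℤ) : ℝ) := by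
      exact_mod_cast Int.lt_iff_add_one_le.mp h'
    push_cast at h''
    linarith

lemma P_comp_apply (A : SpectralMeasure H) (S T : Set ℝ) (u : H) :
    A.P S (A.P T u) = A.P (S ∩ T) u := by
  have h : ((A.P S).comp (A.P T)) u = A.P (S ∩ T) u := by rw [A.inter]
  exact h

lemma inner_P_zero (A : SpectralMeasure H) {S T : Set ℝ} (h : Disjoint S T) (u v : H) :
    ⟪A.P S u, A.P T v⟫_ℂ = 0 := by
  rw [A.symm, P_comp_apply, Set.disjoint_iff_inter_eq_empty.mp h, A.empty]
  simp

lemma P_union (A : SpectralMeasure H) {S T : Set ℝ} (h : Disjoint S T) (u : H) :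
    A.P (S ∪ T) u = A.P S u + A.P T u := by
  classical
  let g : ℕ → Set ℝ := fun n => match n with | 0 => S | 1 => T | _ => ∅
  have hpair : Pairwise (Function.onFun Disjoint g) := by
    intro i j hij
    unfold Function.onFun
    rcases i with _ | _ | i <;> rcases j with _ | _ | j <;>
      first
        | exact absurd rfl hij
        | exact h
        | exact h.symm
        | exact Set.disjoint_empty _
        | exact Set.empty_disjoint _
  have hU : (⋃ n, g n) = S ∪ T := by
    apply Set.Subset.antisymm
    · refine Set.iUnion_subset fun n => ?_
      rcases n with _ | _ | n
      · exact Set.subset_union_left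
      · exact Set.subset_union_right
      · exact Set.empty_subset _
    · exact Set.union_subset (Set.subset_iUnion g 0) (Set.subset_iUnion g 1)
  have h1 := A.hasSum_iUnion g hpair u
  rw [hU] at h1
  have h3 : ∀ n ∉ ({0, 1} : Finset ℕ), A.P (g n) u = 0 := by
    intro n hn
    rcases n with _ | _ | n
    · simp at hn
    · simp at hn
    · show A.P ∅ u = 0
      rw [A.empty]; rfl
  have h2 : HasSum (fun n => A.P (g n) u) (∑ n ∈ ({0, 1} : Finset ℕ), A.P (g n) u) :=
    hasSum_sum_of_ne_finset_zero h3
  rw [Finset.sum_pair (by norm_num : (0:ℕ) ≠ 1)] at h2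
  exact h1.unique h2

lemma P_biUnion (A : SpectralMeasure H) {ι : Type*} (s : Finset ι) (f : ι → Set ℝ)
    (hf : ∀ i ∈ s, ∀ j ∈ s, i ≠ j → Disjoint (f i) (f j)) (u : H) :
    A.P (⋃ i ∈ s, f i) u = ∑ i ∈ s, A.P (f i) u := by
  classical
  revert hf
  refine Finset.induction_on s ?_ ?_
  · intro _
    have h0 : (⋃ i ∈ (∅ : Finset ι), f i) = (∅ : Set ℝ) := by simp
    rw [h0, A.empty]
    simp
  · intro a s ha ih hf
    have hdisj : Disjoint (f a) (⋃ i ∈ s, f i) := by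
      rw [Set.disjoint_left]
      intro t ht hts
      simp only [Set.mem_iUnion] at hts
      obtain ⟨i, hi, hti⟩ := hts
      have hne : a ≠ i := fun hh => ha (hh ▸ hi)
      exact (Set.disjoint_left.mp
        (hf a (Finset.mem_insert_self a s) i (Finset.mem_insert_of_mem hi) hne)) ht hti
    have hU : (⋃ i ∈ insert a s, f i) = f a ∪ ⋃ i ∈ s, f i := by
      simp [Set.biUnion_insert]
    rw [hU, P_union A hdisj u, Finset.sum_insert ha,
      ih (fun i hi j hj hij =>
        hf i (Finset.mem_insert_of_mem hi) j (Finset.mem_insert_of_mem hj) hij)]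

lemma norm_sq_sum (A : SpectralMeasure H) {ι : Type*} (s : Finset ι) (f : ι → Set ℝ)
    (hf : ∀ i ∈ s, ∀ j ∈ s, i ≠ j → Disjoint (f i) (f j)) (u : H) :
    ‖∑ i ∈ s, A.P (f i) u‖ ^ 2 = ∑ i ∈ s, ‖A.P (f i) u‖ ^ 2 := by
  classical
  revert hf
  refine Finset.induction_on s ?_ ?_
  · intro _; simp
  · intro a s ha ih hf
    rw [Finset.sum_insert ha, Finset.sum_insert ha]
    have horth : ⟪A.P (f a) u, ∑ i ∈ s, A.P (f i) u⟫_ℂ = 0 := by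
      rw [inner_sum]
      refine Finset.sum_eq_zero fun i hi => ?_
      exact inner_P_zero A
        (hf a (Finset.mem_insert_self a s) i (Finset.mem_insert_of_mem hi)
          (fun hh => ha (hh ▸ hi))) u u
    have key : ‖A.P (f a) u + ∑ i ∈ s, A.P (f i) u‖ ^ 2
        = ‖A.P (f a) u‖ ^ 2 + ‖∑ i ∈ s, A.P (f i) u‖ ^ 2 := by
      have hh := norm_add_sq_eq_norm_sq_add_norm_sq_of_inner_eq_zero _ _ horth
      simpa [pow_two] using hh
    rw [key, ih (fun i hi j hj hij =>
      hf i (Finset.mem_insert_of_mem hi) j (Finset.mem_insert_of_mem hj) hij)]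

lemma band_apply_eq_sum (A : SpectralMeasure H) (k : ℕ) (u : H) :
    A.band k u = ∑ n ∈ Finset.Icc (-(2^k) : ℤ) (2^k - 1), A.P (unitI n ∩ bandSet k) u := by
  have hcover : (⋃ n ∈ Finset.Icc (-(2^k) : ℤ) (2^k - 1), (unitI n ∩ bandSet k))
      = bandSet k := by
    apply Set.Subset.antisymm
    · exact Set.iUnion₂_subset fun n _ => Set.inter_subset_right
    · intro t ht
      have h2 : |t| < (2:ℝ)^k := ht.2
      have hlb : (-(2^k) : ℝ) ≤ t := by
        rcases abs_lt.mp h2 with ⟨hh, _⟩; linarith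
      have hub : t < (2:ℝ)^k := (abs_lt.mp h2).2
      have hmem : ⌊t⌋ ∈ Finset.Icc (-(2^k) : ℤ) (2^k - 1) := by
        rw [Finset.mem_Icc]
        constructor
        · rw [Int.le_floor]; push_cast; linarith
        · have hfl : ⌊t⌋ < 2^k := by rw [Int.floor_lt]; push_cast; exact hub
          omega
      exact Set.mem_iUnion₂.mpr ⟨⌊t⌋, hmem, ⟨Int.floor_le t, Int.lt_floor_add_one t⟩, ht⟩
  have hdisj : ∀ i ∈ Finset.Icc (-(2^k) : ℤ) (2^k - 1),
      ∀ j ∈ Finset.Icc (-(2^k) : ℤ) (2^k - 1), i ≠ j →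
      Disjoint (unitI i ∩ bandSet k) (unitI j ∩ bandSet k) :=
    fun i _ j _ hij =>
      (unitI_disjoint hij).mono Set.inter_subset_left Set.inter_subset_left
  have hband : A.band k u = A.P (bandSet k) u := rfl
  calc A.band k u = A.P (⋃ n ∈ Finset.Icc (-(2^k) : ℤ) (2^k - 1),
        (unitI n ∩ bandSet k)) u := by rw [hband, hcover]
    _ = ∑ n ∈ Finset.Icc (-(2^k) : ℤ) (2^k - 1), A.P (unitI n ∩ bandSet k) u :=
        P_biUnion A _ _ hdisj u

lemma sum_norm_le (A : SpectralMeasure H) (k : ℕ) (u : H) :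
    ∑ n ∈ Finset.Icc (-(2^k) : ℤ) (2^k - 1), ‖A.P (unitI n ∩ bandSet k) u‖
      ≤ Real.sqrt 2 * Real.sqrt (2^k) * ‖A.band k u‖ := by
  classical
  set s := Finset.Icc (-(2^k) : ℤ) (2^k - 1) with hs
  have hcard : (s.card : ℝ) = 2^(k+1) := by
    have h1 : s.card = 2^(k+1) := by
      rw [hs, Int.card_Icc]
      have h2 : (2^k - 1 + 1 - -(2^k) : ℤ) = ((2^(k+1) : ℕ) : ℤ) := by
        push_cast [pow_succ]; ring
      rw [h2, Int.toNat_natCast]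
    rw [h1]; push_cast; ring
  have hdisj : ∀ i ∈ s, ∀ j ∈ s, i ≠ j →
      Disjoint (unitI i ∩ bandSet k) (unitI j ∩ bandSet k) :=
    fun i _ j _ hij =>
      (unitI_disjoint hij).mono Set.inter_subset_left Set.inter_subset_left
  have hpyth : ∑ n ∈ s, ‖A.P (unitI n ∩ bandSet k) u‖^2 = ‖A.band k u‖^2 := by
    rw [← norm_sq_sum A s _ hdisj u]
    congr 1
    rw [hs, ← band_apply_eq_sum]
  have hcs : (∑ n ∈ s, ‖A.P (unitI n ∩ bandSet k) u‖)^2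
      ≤ (∑ n ∈ s, ‖A.P (unitI n ∩ bandSet k) u‖^2) * (s.card : ℝ) := by
    have hh := Finset.sum_mul_sq_le_sq_mul_sq s
      (fun n => ‖A.P (unitI n ∩ bandSet k) u‖) (fun _ => 1)
    simpa using hh
  have hsum0 : 0 ≤ ∑ n ∈ s, ‖A.P (unitI n ∩ bandSet k) u‖ :=
    Finset.sum_nonneg fun _ _ => norm_nonneg _
  calc ∑ n ∈ s, ‖A.P (unitI n ∩ bandSet k) u‖
      = Real.sqrt ((∑ n ∈ s, ‖A.P (unitI n ∩ bandSet k) u‖)^2) :=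
        (Real.sqrt_sq hsum0).symm
    _ ≤ Real.sqrt ((∑ n ∈ s, ‖A.P (unitI n ∩ bandSet k) u‖^2) * (s.card : ℝ)) :=
        Real.sqrt_le_sqrt hcs
    _ = Real.sqrt (‖A.band k u‖^2 * 2^(k+1)) := by rw [hpyth, hcard]
    _ = Real.sqrt 2 * Real.sqrt (2^k) * ‖A.band k u‖ := by
        rw [Real.sqrt_mul (by positivity), Real.sqrt_sq (norm_nonneg _),
          pow_succ, Real.sqrt_mul (by positivity)]
        ring

lemma block_bound {H₁ H₂ : Type*}
    [NormedAddCommGroup H₁] [InnerProductSpace ℂ H₁] [CompleteSpace H₁]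
    [NormedAddCommGroup H₂] [InnerProductSpace ℂ H₂] [CompleteSpace H₂]
    (A₁ : SpectralMeasure H₁) (A₂ : SpectralMeasure H₂)
    (T : H₁ →L[ℂ] H₂) (C : ℝ)
    (hC : ∀ m n : ℤ,
      ‖(A₂.P {t : ℝ | (m : ℝ) ≤ t ∧ t < (m : ℝ) + 1}).comp
        (T.comp (A₁.P {t : ℝ | (n : ℝ) ≤ t ∧ t < (n : ℝ) + 1}))‖ ≤ C)
    (j l : ℕ) (u : H₁) (v : H₂) :
    ‖⟪A₂.band l v, T (A₁.band j u)⟫_ℂ‖ ≤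
      2 * C * (Real.sqrt (2^j) * ‖A₁.band j u‖) * (Real.sqrt (2^l) * ‖A₂.band l v‖) := by
  classical
  have hC0 : 0 ≤ C := le_trans (norm_nonneg _) (hC 0 0)
  set sj := Finset.Icc (-(2^j) : ℤ) (2^j - 1) with hsj
  set sl := Finset.Icc (-(2^l) : ℤ) (2^l - 1) with hsl
  set z : ℤ → H₁ := fun n => A₁.P (unitI n ∩ bandSet j) u with hz'
  set w : ℤ → H₂ := fun m => A₂.P (unitI m ∩ bandSet l) v with hw'
  have hterm : ∀ m n : ℤ, ‖⟪w m, T (z n)⟫_ℂ‖ ≤ C * ‖w m‖ * ‖z n‖ := by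
    intro m n
    have hz : A₁.P (unitI n) (z n) = z n := by
      show A₁.P (unitI n) (A₁.P (unitI n ∩ bandSet j) u) = A₁.P (unitI n ∩ bandSet j) u
      rw [P_comp_apply, ← Set.inter_assoc, Set.inter_self]
    have hw : A₂.P (unitI m) (w m) = w m := by
      show A₂.P (unitI m) (A₂.P (unitI m ∩ bandSet l) v) = A₂.P (unitI m ∩ bandSet l) v
      rw [P_comp_apply, ← Set.inter_assoc, Set.inter_self]
    have e1 : ⟪w m, T (z n)⟫_ℂ = ⟪w m, A₂.P (unitI m) (T (A₁.P (unitI n) (z n)))⟫_ℂ := by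
      rw [hz, ← A₂.symm, hw]
    rw [e1]
    have e2 : A₂.P (unitI m) (T (A₁.P (unitI n) (z n)))
        = ((A₂.P (unitI m)).comp (T.comp (A₁.P (unitI n)))) (z n) := rfl
    calc ‖⟪w m, A₂.P (unitI m) (T (A₁.P (unitI n) (z n)))⟫_ℂ‖
        ≤ ‖w m‖ * ‖A₂.P (unitI m) (T (A₁.P (unitI n) (z n)))‖ := norm_inner_le_norm _ _
      _ ≤ ‖w m‖ * (C * ‖z n‖) := by
          refine mul_le_mul_of_nonneg_left ?_ (norm_nonneg _)
          rw [e2]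
          calc ‖((A₂.P (unitI m)).comp (T.comp (A₁.P (unitI n)))) (z n)‖
              ≤ ‖(A₂.P (unitI m)).comp (T.comp (A₁.P (unitI n)))‖ * ‖z n‖ :=
                ContinuousLinearMap.le_opNorm _ _
            _ ≤ C * ‖z n‖ := mul_le_mul_of_nonneg_right (hC m n) (norm_nonneg _)
      _ = C * ‖w m‖ * ‖z n‖ := by ring
  have hinner : ⟪A₂.band l v, T (A₁.band j u)⟫_ℂ
      = ∑ m ∈ sl, ∑ n ∈ sj, ⟪w m, T (z n)⟫_ℂ := by
    rw [band_apply_eq_sum A₁ j u, band_apply_eq_sum A₂ l v, map_sum, sum_inner]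
    exact Finset.sum_congr rfl fun m _ => inner_sum _ _ _
  rw [hinner]
  have hw0 : 0 ≤ ∑ m ∈ sl, ‖w m‖ := Finset.sum_nonneg fun _ _ => norm_nonneg _
  have hz0 : 0 ≤ ∑ n ∈ sj, ‖z n‖ := Finset.sum_nonneg fun _ _ => norm_nonneg _
  calc ‖∑ m ∈ sl, ∑ n ∈ sj, ⟪w m, T (z n)⟫_ℂ‖
      ≤ ∑ m ∈ sl, ‖∑ n ∈ sj, ⟪w m, T (z n)⟫_ℂ‖ := norm_sum_le _ _
    _ ≤ ∑ m ∈ sl, ∑ n ∈ sj, ‖⟪w m, T (z n)⟫_ℂ‖ :=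
        Finset.sum_le_sum fun m _ => norm_sum_le _ _
    _ ≤ ∑ m ∈ sl, ∑ n ∈ sj, C * ‖w m‖ * ‖z n‖ :=
        Finset.sum_le_sum fun m _ => Finset.sum_le_sum fun n _ => hterm m n
    _ = C * ((∑ m ∈ sl, ‖w m‖) * (∑ n ∈ sj, ‖z n‖)) := by
        rw [Finset.sum_mul_sum, Finset.mul_sum]
        refine Finset.sum_congr rfl fun m _ => ?_
        rw [Finset.mul_sum]
        exact Finset.sum_congr rfl fun n _ => by ring
    _ ≤ C * ((Real.sqrt 2 * Real.sqrt (2^l) * ‖A₂.band l v‖)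
          * (Real.sqrt 2 * Real.sqrt (2^j) * ‖A₁.band j u‖)) := by
        apply mul_le_mul_of_nonneg_left _ hC0
        exact mul_le_mul (sum_norm_le A₂ l v) (sum_norm_le A₁ j u) hz0 (by positivity)
    _ = 2 * C * (Real.sqrt (2^j) * ‖A₁.band j u‖) * (Real.sqrt (2^l) * ‖A₂.band l v‖) := by
        have h2 : Real.sqrt 2 * Real.sqrt 2 = 2 := Real.mul_self_sqrt (by norm_num)
        rw [show C * ((Real.sqrt 2 * Real.sqrt (2^l) * ‖A₂.band l v‖)
              * (Real.sqrt 2 * Real.sqrt (2^j) * ‖A₁.band j u‖))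
            = (Real.sqrt 2 * Real.sqrt 2) * C * (Real.sqrt (2^j) * ‖A₁.band j u‖)
              * (Real.sqrt (2^l) * ‖A₂.band l v‖) from by ring, h2]

lemma dyadicR_mono : Monotone dyadicR := by
  apply monotone_nat_of_le_succ
  intro k
  cases k with
  | zero => show (0:ℝ) ≤ 2^0; norm_num
  | succ m =>
      show (2:ℝ)^m ≤ 2^(m+1)
      exact pow_le_pow_right₀ (by norm_num) (Nat.le_succ m)

lemma bandSet_disjoint : Pairwise (Function.onFun Disjoint bandSet) := by
  have key : ∀ k k' : ℕ, k < k' → Disjoint (bandSet k) (bandSet k') := by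
    intro k k' h
    rw [Set.disjoint_left]
    rintro t ⟨_, h2⟩ ⟨h3, _⟩
    have hmono : dyadicR (k+1) ≤ dyadicR k' := dyadicR_mono h
    linarith
  intro k k' h
  rcases h.lt_or_gt with h | h
  · exact key _ _ h
  · exact (key _ _ h).symm

lemma iUnion_bandSet : (⋃ k, bandSet k) = Set.univ := by
  rw [Set.eq_univ_iff_forall]
  intro t
  rw [Set.mem_iUnion]
  have hex : ∃ n : ℕ, |t| < (2:ℝ)^n := pow_unbounded_of_one_lt |t| one_lt_two
  refine ⟨Nat.find hex, ?_, Nat.find_spec hex⟩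
  rcases Nat.eq_zero_or_pos (Nat.find hex) with h0 | hpos
  · rw [h0]
    show (0:ℝ) ≤ |t|
    exact abs_nonneg t
  · have hm : ¬ (|t| < (2:ℝ)^(Nat.find hex - 1)) := Nat.find_min hex (by omega)
    have he : dyadicR (Nat.find hex) = 2^(Nat.find hex - 1) := by
      obtain ⟨m, hm'⟩ := Nat.exists_eq_succ_of_ne_zero (by omega : Nat.find hex ≠ 0)
      rw [hm']
      show (2:ℝ)^m = 2^(m + 1 - 1)
      norm_num
    rw [he]
    exact not_lt.mp hm

lemma SpectralMeasure.hasSum_band (A : SpectralMeasure H) (u : H) :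
    HasSum (fun k => A.band k u) u := by
  have hh := A.hasSum_iUnion bandSet bandSet_disjoint u
  rw [iUnion_bandSet, A.univ] at hh
  exact hh

lemma ofReal_norm_le_tsum {ι E : Type*} [NormedAddCommGroup E] {f : ι → E} {s : E}
    (h : HasSum f s) : ENNReal.ofReal ‖s‖ ≤ ∑' i, ENNReal.ofReal ‖f i‖ := by
  by_cases hs : Summable fun i => ‖f i‖
  · have hle : ‖s‖ ≤ ∑' i, ‖f i‖ := by
      rw [← h.tsum_eq]
      exact norm_tsum_le_tsum_norm hs
    rw [← ENNReal.ofReal_tsum_of_nonneg (fun i => norm_nonneg _) hs]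
    exact ENNReal.ofReal_le_ofReal hle
  · have htop : (∑' i, ENNReal.ofReal ‖f i‖) = ⊤ := by
      by_contra hne
      apply hs
      have h2 : (∑' i, ((‖f i‖₊ : NNReal) : ℝ≥0∞)) ≠ ⊤ := by
        simpa [enorm_eq_nnnorm] using hne
      have h3 := ENNReal.tsum_coe_ne_top_iff_summable.mp h2
      have h4 := NNReal.summable_coe.mpr h3
      simpa [coe_nnnorm] using h4
    rw [htop]; exact le_top

/-- if all the blocks `F(m ≤ A₂ < m+1) T F(n ≤ A₁ < n+1)` are bounded
by `C` in operator norm, then `T : B(A₁) → B(A₂)*` with norm at most `2C`, i.e.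
`|⟨v, Tu⟩| ≤ 2C ‖u‖_{B(A₁)} ‖v‖_{B(A₂)}` for all `u, v`. -/
theorem stmt6 {H₁ H₂ : Type*}
    [NormedAddCommGroup H₁] [InnerProductSpace ℂ H₁] [CompleteSpace H₁]
    [NormedAddCommGroup H₂] [InnerProductSpace ℂ H₂] [CompleteSpace H₂]
    (A₁ : SpectralMeasure H₁) (A₂ : SpectralMeasure H₂)
    (T : H₁ →L[ℂ] H₂) (C : ℝ)
    (hC : ∀ m n : ℤ,
      ‖(A₂.P {t : ℝ | (m : ℝ) ≤ t ∧ t < (m : ℝ) + 1}).comp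
        (T.comp (A₁.P {t : ℝ | (n : ℝ) ≤ t ∧ t < (n : ℝ) + 1}))‖ ≤ C) :
    ∀ (u : H₁) (v : H₂),
      ENNReal.ofReal ‖⟪v, T u⟫_ℂ‖ ≤ ENNReal.ofReal (2 * C) * A₁.besov u * A₂.besov v := by
  intro u v
  have hC0 : 0 ≤ C := le_trans (norm_nonneg _) (hC 0 0)
  have hu := A₁.hasSum_band u
  have hv := A₂.hasSum_band v
  have h1 : HasSum (fun l => ⟪T u, A₂.band l v⟫_ℂ) ⟪T u, v⟫_ℂ :=
    (innerSL ℂ (T u)).hasSum hv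
  have step1 : ENNReal.ofReal ‖⟪v, T u⟫_ℂ‖
      ≤ ∑' l, ENNReal.ofReal ‖⟪A₂.band l v, T u⟫_ℂ‖ := by
    rw [norm_inner_symm]
    calc ENNReal.ofReal ‖⟪T u, v⟫_ℂ‖
        ≤ ∑' l, ENNReal.ofReal ‖⟪T u, A₂.band l v⟫_ℂ‖ := ofReal_norm_le_tsum h1
      _ = ∑' l, ENNReal.ofReal ‖⟪A₂.band l v, T u⟫_ℂ‖ :=
        tsum_congr fun l => by rw [norm_inner_symm]
  have step2 : ∀ l, ENNReal.ofReal ‖⟪A₂.band l v, T u⟫_ℂ‖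
      ≤ ∑' j, ENNReal.ofReal ‖⟪A₂.band l v, T (A₁.band j u)⟫_ℂ‖ := by
    intro l
    exact ofReal_norm_le_tsum (((innerSL ℂ (A₂.band l v)).comp T).hasSum hu)
  have step3 : ∀ l j, ENNReal.ofReal ‖⟪A₂.band l v, T (A₁.band j u)⟫_ℂ‖
      ≤ ENNReal.ofReal (2*C)
        * ENNReal.ofReal (Real.sqrt (dyadicR (j+1)) * ‖A₁.band j u‖)
        * ENNReal.ofReal (Real.sqrt (dyadicR (l+1)) * ‖A₂.band l v‖) := by
    intro l j
    have hb := block_bound A₁ A₂ T C hC j l u v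
    have ha : (0:ℝ) ≤ Real.sqrt (2^j) * ‖A₁.band j u‖ := by positivity
    have h2C : (0:ℝ) ≤ 2*C := by linarith
    calc ENNReal.ofReal ‖⟪A₂.band l v, T (A₁.band j u)⟫_ℂ‖
        ≤ ENNReal.ofReal (2 * C * (Real.sqrt (2^j) * ‖A₁.band j u‖)
            * (Real.sqrt (2^l) * ‖A₂.band l v‖)) := ENNReal.ofReal_le_ofReal hb
      _ = ENNReal.ofReal (2*C)
          * ENNReal.ofReal (Real.sqrt (dyadicR (j+1)) * ‖A₁.band j u‖)
          * ENNReal.ofReal (Real.sqrt (dyadicR (l+1)) * ‖A₂.band l v‖) := by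
        rw [ENNReal.ofReal_mul (mul_nonneg h2C ha), ENNReal.ofReal_mul h2C]
        rfl
  calc ENNReal.ofReal ‖⟪v, T u⟫_ℂ‖
      ≤ ∑' l, ENNReal.ofReal ‖⟪A₂.band l v, T u⟫_ℂ‖ := step1
    _ ≤ ∑' l, ∑' j, ENNReal.ofReal ‖⟪A₂.band l v, T (A₁.band j u)⟫_ℂ‖ :=
        ENNReal.tsum_le_tsum step2
    _ ≤ ∑' l, ∑' j, (ENNReal.ofReal (2*C)
          * ENNReal.ofReal (Real.sqrt (dyadicR (j+1)) * ‖A₁.band j u‖)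
          * ENNReal.ofReal (Real.sqrt (dyadicR (l+1)) * ‖A₂.band l v‖)) :=
        ENNReal.tsum_le_tsum fun l => ENNReal.tsum_le_tsum fun j => step3 l j
    _ = ENNReal.ofReal (2 * C) * A₁.besov u * A₂.besov v := by
        have hin : ∀ l, (∑' j, (ENNReal.ofReal (2*C)
            * ENNReal.ofReal (Real.sqrt (dyadicR (j+1)) * ‖A₁.band j u‖)
            * ENNReal.ofReal (Real.sqrt (dyadicR (l+1)) * ‖A₂.band l v‖)))
            = ENNReal.ofReal (2*C) * A₁.besov u
              * ENNReal.ofReal (Real.sqrt (dyadicR (l+1)) * ‖A₂.band l v‖) := by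
          intro l
          rw [ENNReal.tsum_mul_right, ENNReal.tsum_mul_left]
          rfl
        simp only [hin]
        rw [ENNReal.tsum_mul_left]
        rfl
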